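/- Let (E, L, E) be a labeled space with E the smallest non-degenerate accommodating set. Suppose (E, L, E) is strongly cofinal and for every nonempty A ∈ E and every B ∈ E there exists C ∈ E_reg with B \ C ∈ H(A). Then (E, L, E) is minimal, i.e., the only hereditary saturated subsets of E are {∅} and E. -/

import Mathlib

universe u v

variable {V : Type u} {Λ : Type v}

/-- The relative range `r(S, α)` of a set of vertices along a labeled path. -/
def relRange (Edge : V → Λ → V → Prop) : Set V → List Λ → Set V
  | S, [] => S
  | S, a :: α => relRange Edge {w | ∃ u ∈ S, Edge u a w} α

/-- The range `r(α)` of a labeled path. -/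
def lrange (Edge : V → Λ → V → Prop) (α : List Λ) : Set V :=
  relRange Edge Set.univ α

/-- `α` is a (nonempty) labeled path of the labeled graph. -/
def IsLP (Edge : V → Λ → V → Prop) (α : List Λ) : Prop :=
  α ≠ [] ∧ (lrange Edge α).Nonempty

/-- `L(SE¹)`: labels of edges emitted from `S`. -/
def edgeLabels (Edge : V → Λ → V → Prop) (S : Set V) : Set Λ :=
  {a | ∃ u ∈ S, ∃ w, Edge u a w}

/-- `S` is regular: every nonempty `B ∈ ℬ` with `B ⊆ S` emits a finite nonzero set of labels. -/
def RegularSet (Edge : V → Λ → V → Prop) (ℬ : Set (Set V)) (S : Set V) : Prop :=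
  ∀ B ∈ ℬ, B ⊆ S → B.Nonempty →
    (edgeLabels Edge B).Finite ∧ (edgeLabels Edge B).Nonempty

/-- `H ⊆ ℬ` is hereditary. -/
def Hered (Edge : V → Λ → V → Prop) (ℬ H : Set (Set V)) : Prop :=
  H ⊆ ℬ ∧ (∀ A ∈ H, ∀ α : List Λ, IsLP Edge α → relRange Edge A α ∈ H) ∧
    (∀ A ∈ H, ∀ B ∈ H, A ∪ B ∈ H) ∧ (∀ A ∈ H, ∀ B ∈ ℬ, B ⊆ A → B ∈ H)

/-- `H` is saturated. -/
def Satur (Edge : V → Λ → V → Prop) (ℬ H : Set (Set V)) : Prop :=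
  ∀ A ∈ ℬ, RegularSet Edge ℬ A →
    (∀ α : List Λ, IsLP Edge α → relRange Edge A α ∈ H) → A ∈ H

/-- `H(A)`: sets covered by finitely many relative ranges `r(A, αᵢ)`, `αᵢ ∈ L^#(E)`. -/
def HSet (Edge : V → Λ → V → Prop) (ℬ : Set (Set V)) (A : Set V) : Set (Set V) :=
  {B ∈ ℬ | ∃ l : List (List Λ), (∀ α ∈ l, α = [] ∨ IsLP Edge α) ∧
    B ⊆ ⋃ α ∈ l, relRange Edge A α}

/-- `S(H(A))`: the saturation of `H(A)`. -/
def SHSet (Edge : V → Λ → V → Prop) (ℬ : Set (Set V)) (A : Set V) : Set (Set V) :=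
  {B ∈ ℬ | ∃ n : ℕ,
    (∀ β : List Λ, (β = [] ∨ IsLP Edge β) → β.length = n →
      relRange Edge B β ∈ HSet Edge ℬ A) ∧
    (∀ γ : List Λ, (γ = [] ∨ IsLP Edge γ) → γ.length < n →
      ∃ C ∈ HSet Edge ℬ A, ∃ D ∈ ℬ, RegularSet Edge ℬ D ∧ relRange Edge B γ = C ∪ D)}

/-- `ℬ` is an accommodating set for the labeled graph. -/
def Accommodating (Edge : V → Λ → V → Prop) (ℬ : Set (Set V)) : Prop :=
  (∀ α : List Λ, IsLP Edge α → lrange Edge α ∈ ℬ) ∧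
    (∀ A ∈ ℬ, ∀ α : List Λ, IsLP Edge α → relRange Edge A α ∈ ℬ) ∧
    (∀ A ∈ ℬ, ∀ B ∈ ℬ, A ∪ B ∈ ℬ) ∧ (∀ A ∈ ℬ, ∀ B ∈ ℬ, A ∩ B ∈ ℬ)

/-- `ℬ` is non-degenerate: closed under relative complements (and contains `∅`). -/
def NonDegenerate (ℬ : Set (Set V)) : Prop :=
  (∅ : Set V) ∈ ℬ ∧ ∀ A ∈ ℬ, ∀ B ∈ ℬ, A \ B ∈ ℬ

/-- The labeled space is weakly left-resolving. -/
def WLR (Edge : V → Λ → V → Prop) (ℬ : Set (Set V)) : Prop :=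
  ∀ A ∈ ℬ, ∀ B ∈ ℬ, ∀ α : List Λ, IsLP Edge α →
    relRange Edge (A ∩ B) α = relRange Edge A α ∩ relRange Edge B α

/-- `ℬ` is the smallest non-degenerate accommodating set. -/
def SmallestAccom (Edge : V → Λ → V → Prop) (ℬ : Set (Set V)) : Prop :=
  Accommodating Edge ℬ ∧ NonDegenerate ℬ ∧
    ∀ ℬ' : Set (Set V), Accommodating Edge ℬ' → NonDegenerate ℬ' → ℬ ⊆ ℬ'

/-- `x_{[1,n]}`: the length-`n` prefix of an infinite word. -/
def wordPrefix (x : ℕ → Λ) (n : ℕ) : List Λ := List.ofFn fun i : Fin n => x i.val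

/-- `x` lies in the closure of `L(E^∞)`: all finite prefixes are labeled paths. -/
def InfWord (Edge : V → Λ → V → Prop) (x : ℕ → Λ) : Prop :=
  ∀ n : ℕ, 1 ≤ n → IsLP Edge (wordPrefix x n)

/-- Strong cofinality of a labeled space. -/
def StrCofinal (Edge : V → Λ → V → Prop) (ℬ : Set (Set V)) : Prop :=
  ∀ A ∈ ℬ, A.Nonempty → ∀ x : ℕ → Λ, InfWord Edge x →
    ∃ N : ℕ, 1 ≤ N ∧ ∃ l : List (List Λ), (∀ α ∈ l, IsLP Edge α) ∧
      lrange Edge (wordPrefix x N) ⊆ ⋃ α ∈ l, relRange Edge A α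

/-- Minimality: the only hereditary saturated subsets of `ℬ` are `{∅}` and `ℬ`. -/
def MinimalLS (Edge : V → Λ → V → Prop) (ℬ : Set (Set V)) : Prop :=
  ∀ H : Set (Set V), Hered Edge ℬ H → Satur Edge ℬ H → H ⊆ {∅} ∨ H = ℬ

/-- `L(SEⁿ)`: labels of paths of length `n` with source in `S`. -/
def labelsOfLen (Edge : V → Λ → V → Prop) (S : Set V) (n : ℕ) : Set (List Λ) :=
  {β | β.length = n ∧ (relRange Edge S β).Nonempty}

/-- The labeled space is disagreeable. -/
def Disagreeable (Edge : V → Λ → V → Prop) (ℬ : Set (Set V)) : Prop :=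
  ∀ A ∈ ℬ, A.Nonempty → ∀ β : List Λ, IsLP Edge β →
    ∃ n : ℕ, 1 ≤ n ∧ labelsOfLen Edge A (β.length * n) ≠ {(List.replicate n β).flatten}

/-- `(α, A)` is a cycle. -/
def IsCycle (Edge : V → Λ → V → Prop) (ℬ : Set (Set V)) (α : List Λ) (A : Set V) : Prop :=
  IsLP Edge α ∧ A ∈ ℬ ∧ A.Nonempty ∧ ∀ B ∈ ℬ, B ⊆ A → relRange Edge B α = B

/-- The cycle `(α, A)` has an exit. -/
def CycleHasExit (Edge : V → Λ → V → Prop) (ℬ : Set (Set V)) (α : List Λ) (A : Set V) : Prop :=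
  ∃ t : ℕ, 1 ≤ t ∧ t ≤ α.length ∧ ∃ B ∈ ℬ, B.Nonempty ∧
    B ⊆ relRange Edge A (α.take t) ∧
    edgeLabels Edge B ≠ {a : Λ | α[t % α.length]? = some a}

/-- The cycle `(α, A)` has no exits. -/
def CycleNoExit (Edge : V → Λ → V → Prop) (ℬ : Set (Set V)) (α : List Λ) (A : Set V) : Prop :=
  ∀ t : ℕ, 1 ≤ t → t ≤ α.length → ∀ B ∈ ℬ, B.Nonempty →
    B ⊆ relRange Edge A (α.take t) →
    RegularSet Edge ℬ B ∧ edgeLabels Edge B = {a : Λ | α[t % α.length]? = some a}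

/-- Condition (L): every cycle has an exit. -/
def CondL (Edge : V → Λ → V → Prop) (ℬ : Set (Set V)) : Prop :=
  ∀ (α : List Λ) (A : Set V), IsCycle Edge ℬ α A → CycleHasExit Edge ℬ α A

/-- `α` is a loop at `A`. -/
def IsLoop (Edge : V → Λ → V → Prop) (α : List Λ) (A : Set V) : Prop :=
  IsLP Edge α ∧ A ⊆ relRange Edge A α

/-- The loop `(α, A)` has an exit. -/
def LoopHasExit (Edge : V → Λ → V → Prop) (α : List Λ) (A : Set V) : Prop :=
  {β : List Λ | ∃ k : ℕ, 1 ≤ k ∧ k ≤ α.length ∧ β = α.take k} ⊂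
      {β : List Λ | 1 ≤ β.length ∧ β.length ≤ α.length ∧ (relRange Edge A β).Nonempty} ∨
    A ⊂ relRange Edge A α

/-- `β` is an irreducible path: not a repetition of a proper initial path. -/
def IrreduciblePath (β : List Λ) : Prop :=
  ∀ k : ℕ, 1 ≤ k → k < β.length → ∀ m : ℕ, β ≠ (List.replicate m (β.take k)).flatten

/-- The generalized vertex `[v]_l`. -/
def gvClass (Edge : V → Λ → V → Prop) (l : ℕ) (v : V) : Set V :=
  {w | ∀ β : List Λ, 1 ≤ β.length → β.length ≤ l → (v ∈ lrange Edge β ↔ w ∈ lrange Edge β)}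

/-- `s(x)`: sources of infinite paths labeled by `x`. -/
def srcInf (Edge : V → Λ → V → Prop) (x : ℕ → Λ) : Set V :=
  {w | ∃ p : ℕ → V, p 0 = w ∧ ∀ n : ℕ, Edge (p n) (x n) (p (n + 1))}


theorem relRange_mono (Edge : V → Λ → V → Prop) {S T : Set V} (h : S ⊆ T) :
    ∀ α : List Λ, relRange Edge S α ⊆ relRange Edge T α := by
  intro α
  induction α generalizing S T with
  | nil => exact h
  | cons a α ih =>
    exact ih fun w hw => by
      obtain ⟨u, hu, he⟩ := hw
      exact ⟨u, h hu, he⟩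

theorem relRange_subset_lrange (Edge : V → Λ → V → Prop) (S : Set V) (α : List Λ) :
    relRange Edge S α ⊆ lrange Edge α :=
  relRange_mono Edge (Set.subset_univ S) α

theorem relRange_append (Edge : V → Λ → V → Prop) (S : Set V) :
    ∀ α β : List Λ, relRange Edge S (α ++ β) = relRange Edge (relRange Edge S α) β := by
  intro α
  induction α generalizing S with
  | nil => intro β; rfl
  | cons a α ih => intro β; exact ih _ β

/-- strong cofinality together with the regular-difference condition
implies minimality. -/
theorem cofinal_and_regular_implies_minimal (Edge : V → Λ → V → Prop)
    (ℰ : Set (Set V)) (hsm : SmallestAccom Edge ℰ) (hwlr : WLR Edge ℰ)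
    (hcof : StrCofinal Edge ℰ)
    (hreg : ∀ A ∈ ℰ, A.Nonempty → ∀ B ∈ ℰ, ∃ C ∈ ℰ, RegularSet Edge ℰ C ∧
      B \ C ∈ HSet Edge ℰ A) :
    MinimalLS Edge ℰ := by
  classical
  intro H hH hSat
  by_cases htriv : H ⊆ {∅}
  · exact Or.inl htriv
  right
  -- get a nonempty A ∈ H
  obtain ⟨A, hA, hAne'⟩ : ∃ A ∈ H, A ≠ ∅ := by
    by_contra hcon
    push_neg at hcon
    exact htriv fun A hA => hcon A hA
  have hAne : A.Nonempty := Set.nonempty_iff_ne_empty.mpr hAne'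
  have hAE : A ∈ ℰ := hH.1 hA
  obtain ⟨hAcc, hND, _⟩ := hsm
  have hempty : (∅ : Set V) ∈ H := hH.2.2.2 A hA ∅ hND.1 (Set.empty_subset A)
  -- H(A) ⊆ H
  have hUnion : ∀ l : List (List Λ), (∀ α ∈ l, α = [] ∨ IsLP Edge α) →
      (⋃ α ∈ l, relRange Edge A α) ∈ H := by
    intro l
    induction l with
    | nil => intro _; simpa using hempty
    | cons α l ih =>
      intro hl
      have h1 : relRange Edge A α ∈ H := by
        rcases hl α List.mem_cons_self with h | h
        · rw [h]; exact hA
        · exact hH.2.1 A hA α h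
      have h2 := ih fun β hβ => hl β (List.mem_cons_of_mem _ hβ)
      simpa using hH.2.2.1 _ h1 _ h2
  have hHSet : ∀ X ∈ HSet Edge ℰ A, X ∈ H := by
    rintro X ⟨hXE, l, hl, hcov⟩
    exact hH.2.2.2 _ (hUnion l hl) X hXE hcov
  -- show ℰ ⊆ H
  apply Set.Subset.antisymm hH.1
  intro B hBE
  by_contra hBH
  -- "bad" prefixes
  set P : List Λ → Prop := fun β => (β = [] ∨ IsLP Edge β) ∧ relRange Edge B β ∉ H with hP
  have hP0 : P [] := ⟨Or.inl rfl, hBH⟩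
  -- key step: a bad path extends to a longer bad path
  have hstep : ∀ β : List Λ, P β → ∃ a : Λ, P (β ++ [a]) := by
    rintro β ⟨hβlp, hβH⟩
    set B' := relRange Edge B β with hB'
    have hB'E : B' ∈ ℰ := by
      rcases hβlp with h | h
      · rw [hB', h]; exact hBE
      · exact hAcc.2.1 B hBE β h
    obtain ⟨C, hCE, hCreg, hdiff⟩ := hreg A hAE hAne B' hB'E
    have hdiffH : B' \ C ∈ H := hHSet _ hdiff
    set D := B' ∩ C with hD
    have hDE : D ∈ ℰ := hAcc.2.2.2 B' hB'E C hCE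
    have hDH : D ∉ H := by
      intro hDH
      have hun : (B' \ C) ∪ D ∈ H := hH.2.2.1 _ hdiffH _ hDH
      have hsub : B' ⊆ (B' \ C) ∪ D := by
        intro v hv
        by_cases hvC : v ∈ C
        · exact Or.inr ⟨hv, hvC⟩
        · exact Or.inl ⟨hv, hvC⟩
      exact hβH (hH.2.2.2 _ hun B' hB'E hsub)
    have hDreg : RegularSet Edge ℰ D := fun S hS hSD hSne =>
      hCreg S hS (hSD.trans Set.inter_subset_right) hSne
    -- saturation contrapositive gives a bad one-step extension
    have hex : ∃ α : List Λ, IsLP Edge α ∧ relRange Edge D α ∉ H := by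
      by_contra hcon
      push_neg at hcon
      exact hDH (hSat D hDE hDreg fun α hα => hcon α hα)
    obtain ⟨α, hαlp, hαH⟩ := hex
    obtain ⟨a, α', rfl⟩ : ∃ a α', α = a :: α' := by
      cases α with
      | nil => exact absurd rfl hαlp.1
      | cons a α' => exact ⟨a, α', rfl⟩
    have hsplit : relRange Edge D (a :: α') =
        relRange Edge (relRange Edge D [a]) α' := rfl
    have hE1H : relRange Edge D [a] ∉ H := by
      intro hmem
      apply hαH
      rw [hsplit]
      rcases List.eq_nil_or_concat α' with h | hcc
      · rw [h]; exact hmem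
      obtain ⟨l2, b, rfl⟩ := hcc
      by_cases hne : (lrange Edge (l2.concat b)).Nonempty
      · exact hH.2.1 _ hmem _ ⟨by simp, hne⟩
      · have hz : relRange Edge (relRange Edge D [a]) (l2.concat b) = ∅ := by
          rw [Set.not_nonempty_iff_eq_empty] at hne
          have := relRange_subset_lrange Edge (relRange Edge D [a]) (l2.concat b)
          rw [hne] at this
          exact Set.subset_empty_iff.mp this
        rw [hz]; exact hempty
    set E1 := relRange Edge D [a] with hE1
    have hE1ne : E1.Nonempty := by
      rw [Set.nonempty_iff_ne_empty]
      intro h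
      apply hE1H
      show E1 ∈ H
      rw [h]; exact hempty
    have hlpa : IsLP Edge [a] := by
      refine ⟨by simp, ?_⟩
      obtain ⟨v, hv⟩ := hE1ne
      exact ⟨v, relRange_subset_lrange Edge D [a] hv⟩
    have hE1E : E1 ∈ ℰ := hAcc.2.1 D hDE [a] hlpa
    refine ⟨a, ?_, ?_⟩
    · -- β ++ [a] is an LP
      right
      refine ⟨by simp, ?_⟩
      obtain ⟨v, hv⟩ := hE1ne
      have hvB : v ∈ relRange Edge B (β ++ [a]) := by
        rw [relRange_append]
        exact relRange_mono Edge Set.inter_subset_left [a] hv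
      exact ⟨v, relRange_subset_lrange Edge B (β ++ [a]) hvB⟩
    · -- relRange B (β ++ [a]) ∉ H
      intro hmem
      apply hE1H
      refine hH.2.2.2 _ hmem E1 hE1E ?_
      rw [relRange_append]
      exact relRange_mono Edge Set.inter_subset_left [a]
  -- build an infinite bad word
  haveI hΛ : Nonempty Λ := ⟨(hstep [] hP0).choose⟩
  set nxt : List Λ → Λ := fun β =>
    if hb : P β then (hstep β hb).choose else Classical.arbitrary Λ with hnxt
  set f : ℕ → List Λ := fun n => Nat.rec [] (fun _ β => β ++ [nxt β]) n with hf
  have hf0 : f 0 = [] := rfl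
  have hfs : ∀ n, f (n + 1) = f n ++ [nxt (f n)] := fun n => rfl
  have hfbad : ∀ n, P (f n) := by
    intro n
    induction n with
    | zero => exact hP0
    | succ n ih =>
      rw [hfs, hnxt]
      simp only [dif_pos ih]
      exact (hstep (f n) ih).choose_spec
  have hflen : ∀ n, (f n).length = n := by
    intro n
    induction n with
    | zero => rfl
    | succ n ih => rw [hfs]; simp [ih]
  set x : ℕ → Λ := fun n => nxt (f n) with hx
  have hpre : ∀ n, wordPrefix x n = f n := by
    intro n
    induction n with
    | zero => rfl
    | succ n ih =>
      have hsnoc : wordPrefix x (n + 1) = wordPrefix x n ++ [x n] := by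
        unfold wordPrefix
        rw [List.ofFn_succ']
        simp [List.concat_eq_append]
      rw [hsnoc, ih, hfs]
  have hinf : InfWord Edge x := by
    intro n hn
    rw [hpre]
    rcases (hfbad n).1 with h | h
    · exfalso
      have := hflen n
      rw [h] at this
      simp at this
      omega
    · exact h
  obtain ⟨N, hN1, l, hllp, hcov⟩ := hcof A hAE hAne x hinf
  have hlpN : IsLP Edge (f N) := by
    rcases (hfbad N).1 with h | h
    · exfalso
      have := hflen N
      rw [h] at this
      simp at this
      omega
    · exact h
  have hmem : relRange Edge B (f N) ∈ HSet Edge ℰ A := by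
    refine ⟨hAcc.2.1 B hBE (f N) hlpN, l, fun α hα => Or.inr (hllp α hα), ?_⟩
    calc relRange Edge B (f N) ⊆ lrange Edge (f N) :=
          relRange_subset_lrange Edge B (f N)
      _ = lrange Edge (wordPrefix x N) := by rw [hpre]
      _ ⊆ ⋃ α ∈ l, relRange Edge A α := hcov
  exact (hfbad N).2 (hHSet _ hmem)
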